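/- Let G be an ℕ-edge-weighted graph viewed as a weighted complete graph (with 0 on non-edges). Then the weighting is irregular (all weighted vertex degrees are pairwise distinct) if and only if |s(G * I(S(1)))| = |V(G)|. -/

import Mathlib

def pairs (n : ℕ) : Finset (Fin n × Fin n) := Finset.univ.filter fun p => p.1 < p.2

def spec {R : Type*} [CommSemiring R] {n : ℕ} (H K : Fin n → Fin n → R) : Set R :=
  { s | ∃ f : Fin n ≃ Fin n, s = ∑ p ∈ pairs n, H p.1 p.2 * K (f p.1) (f p.2) }

def starW {n : ℕ} (c : Fin n) : Fin n → Fin n → ℕ :=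
  fun a b => if a ≠ b ∧ (a = c ∨ b = c) then 1 else 0

def wdeg {n : ℕ} (w : Fin n → Fin n → ℕ) (v : Fin n) : ℕ := ∑ u, w v u

lemma sum_pairs_star {n : ℕ} (c v : Fin n) (w : Fin n → Fin n → ℕ)
    (hsymm : ∀ a b, w a b = w b a) (hdiag : ∀ a, w a a = 0)
    (f : Fin n ≃ Fin n) (hv : f v = c) :
    ∑ p ∈ pairs n, w p.1 p.2 * starW c (f p.1) (f p.2) = wdeg w v := by
  have key : ∀ p ∈ pairs n, w p.1 p.2 * starW c (f p.1) (f p.2)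
      = if p.1 = v ∨ p.2 = v then w p.1 p.2 else 0 := by
    rintro ⟨a, b⟩ hp
    simp only [pairs, Finset.mem_filter] at hp
    have hab : a ≠ b := ne_of_lt hp.2
    have hfa : f a ≠ f b := fun h => hab (f.injective h)
    have h1 : (f a = c ∨ f b = c) ↔ (a = v ∨ b = v) := by
      subst hv
      constructor
      · rintro (h | h)
        · exact Or.inl (f.injective h)
        · exact Or.inr (f.injective h)
      · rintro (h | h) <;> subst h <;> simp
    simp only [starW]
    by_cases h : a = v ∨ b = v
    · rw [if_pos ⟨hfa, h1.mpr h⟩, if_pos h, mul_one]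
    · rw [if_neg (fun hc => h (h1.mp hc.2)), if_neg h, mul_zero]
  rw [Finset.sum_congr rfl key, Finset.sum_ite, Finset.sum_const_zero, add_zero]
  -- now sum over pairs containing v equals wdeg w v
  have : (∑ u ∈ Finset.univ.erase v, w v u) = wdeg w v := by
    rw [wdeg, ← Finset.sum_erase_add _ _ (Finset.mem_univ v), hdiag, add_zero]
  rw [← this]
  refine Finset.sum_nbij' (fun p => if p.1 = v then p.2 else p.1)
    (fun u => if v < u then (v, u) else (u, v)) ?_ ?_ ?_ ?_ ?_
  · rintro ⟨a, b⟩ hp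
    simp only [pairs, Finset.mem_filter, Finset.mem_univ, true_and] at hp
    dsimp only
    rcases hp.2 with h | h
    · rw [if_pos h]
      have : v < b := h ▸ hp.1
      simp [Finset.mem_erase, this.ne']
    · have ha : a ≠ v := h ▸ (ne_of_lt hp.1)
      rw [if_neg ha]
      simp [Finset.mem_erase, ha]
  · intro u hu
    simp only [Finset.mem_erase, Finset.mem_univ, and_true] at hu
    by_cases h : v < u
    · simp [pairs, h]
    · have h' : u < v := lt_of_le_of_ne (not_lt.mp h) hu
      simp [pairs, h, h']
  · rintro ⟨a, b⟩ hp
    simp only [pairs, Finset.mem_filter, Finset.mem_univ, true_and] at hp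
    dsimp only
    rcases hp.2 with h | h
    · have hb : v < b := h ▸ hp.1
      rw [if_pos h, if_pos hb, h]
    · have ha : a ≠ v := h ▸ (ne_of_lt hp.1)
      have hnb : ¬ v < a := not_lt.mpr (h ▸ hp.1.le)
      rw [if_neg ha, if_neg hnb, h]
  · intro u hu
    simp only [Finset.mem_erase, Finset.mem_univ, and_true] at hu
    by_cases h : v < u
    · simp [h]
    · simp [h, hu]
  · rintro ⟨a, b⟩ hp
    simp only [pairs, Finset.mem_filter, Finset.mem_univ, true_and] at hp
    dsimp only
    rcases hp.2 with h | h
    · rw [if_pos h, h]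
    · have ha : a ≠ v := h ▸ (ne_of_lt hp.1)
      rw [if_neg ha, ← h]
      exact hsymm a b

/-- An `ℕ`-weighting (with `0` on non-edges) is irregular, i.e. all weighted degrees are
pairwise distinct, iff `|s(G * I(S(1)))| = |V(G)|`. -/
theorem irregular_iff_spec_card {n : ℕ} (hn : 1 ≤ n)
    (G : SimpleGraph (Fin n)) [DecidableRel G.Adj]
    (w : Fin n → Fin n → ℕ) (hsymm : ∀ a b, w a b = w b a)
    (hzero : ∀ a b, ¬ G.Adj a b → w a b = 0) :
    Function.Injective (wdeg w) ↔ (spec w (starW (⟨0, hn⟩ : Fin n))).ncard = n := by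
  set c : Fin n := ⟨0, hn⟩
  have hdiag : ∀ a, w a a = 0 := fun a => hzero a a (G.loopless.irrefl a)
  have hspec : spec w (starW c) = Set.range (wdeg w) := by
    ext s
    constructor
    · rintro ⟨f, rfl⟩
      exact ⟨f.symm c, (sum_pairs_star c (f.symm c) w hsymm hdiag f (f.apply_symm_apply c)).symm⟩
    · rintro ⟨v, rfl⟩
      exact ⟨Equiv.swap v c, (sum_pairs_star c v w hsymm hdiag _ (Equiv.swap_apply_left v c)).symm⟩
  rw [hspec]
  have : Set.range (wdeg w) = ↑(Finset.univ.image (wdeg w)) := by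
    simp [← Set.image_univ]
  rw [this, Set.ncard_coe_finset]
  constructor
  · intro h
    rw [Finset.card_image_of_injective _ h, Finset.card_univ, Fintype.card_fin]
  · intro h
    have : Set.InjOn (wdeg w) ↑(Finset.univ : Finset (Fin n)) := by
      rw [← Finset.card_image_iff]
      simp [h]
    intro a b hab
    exact this (Finset.mem_coe.mpr (Finset.mem_univ a)) (Finset.mem_coe.mpr (Finset.mem_univ b)) hab
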